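/- ℙ¹-almost surely, on the event [ω(0) = 2 and S₁ = X₁], if the greedy walk (on the full configuration ω) returns to 0, i.e. T₀ < ∞, then there exists k ≥ 0 such that L_{k+1} > L₀ + L₁ + ⋯ + L_k. -/

import Mathlib

open scoped ENNReal

noncomputable section

/-- The number of points of a configuration `Xs ⊆ ℝ` lying in a window `A`. -/
def ptCount (Xs : Set ℝ) (A : Set ℝ) : ℕ := (Xs ∩ A).ncard

/-- `N` is a Poisson point process of intensity `c` (with respect to Lebesgue measure)
under the probability measure `P`: configurations are a.s. locally finite, the number of
points in any finite-volume measurable window is Poisson distributed with mean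
`c * volume A`, and the counts in pairwise disjoint windows are independent. -/
def IsPoissonPP {Ω : Type} [MeasurableSpace Ω] (P : MeasureTheory.Measure Ω)
    (N : Ω → Set ℝ) (c : ℝ) : Prop :=
  (∀ᵐ ωs ∂P, ∀ r : ℝ, (N ωs ∩ Set.Icc (-r) r).Finite) ∧
  (∀ A : Set ℝ, MeasurableSet A → Measurable fun ωs => ptCount (N ωs) A) ∧
  (∀ A : Set ℝ, MeasurableSet A → MeasureTheory.volume A ≠ ⊤ → ∀ n : ℕ,
      P {ωs | ptCount (N ωs) A = n} =
        ENNReal.ofReal (Real.exp (-(c * (MeasureTheory.volume A).toReal)) *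
          (c * (MeasureTheory.volume A).toReal) ^ n / n.factorial)) ∧
  (∀ (m : ℕ) (A : Fin m → Set ℝ), (∀ i, MeasurableSet (A i)) →
      Pairwise (Function.onFun Disjoint A) →
      ProbabilityTheory.iIndepFun
        (fun i ωs => ptCount (N ωs) (A i)) P)

/-- `(X, Y)` is a two-mark Poisson configuration of parameter `p` under `P`:
`X` is a Poisson point process of intensity `1` and `Y` is an independent `p`-thinning
of `X`.  Equivalently, `Y` (the doubly-marked points) and `X \ Y` (the singly-marked
points) are independent Poisson point processes of respective intensities `p` and `1-p`. -/
def IsTwoMarkPoisson {Ω : Type} [MeasurableSpace Ω] (P : MeasureTheory.Measure Ω)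
    (X Y : Ω → Set ℝ) (p : ℝ) : Prop :=
  (∀ ωs, Y ωs ⊆ X ωs) ∧
  IsPoissonPP P Y p ∧
  IsPoissonPP P (fun ωs => X ωs \ Y ωs) (1 - p) ∧
  (∀ (m : ℕ) (A : Fin m → Set ℝ), (∀ i, MeasurableSet (A i)) →
      Pairwise (Function.onFun Disjoint A) →
      ProbabilityTheory.iIndepFun
        (fun (k : Fin m × Bool) ωs =>
          ptCount (if k.2 then Y ωs else X ωs \ Y ωs) (A k.1)) P)

/-- The model of the paper, under the Palm measure `ℙ¹`:
* `X` is a Poisson point process of intensity `1` on `ℝ`, conditioned (in the Palm sense)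
  to have a point at the origin, and `Y ⊆ X` is an independent `p`-thinning of `X`;
  points of `Y` carry two marks and the remaining points of `X` carry one mark
  (field `marks x 0`).
* For every starting point `x ∈ X`, `S x` is the greedy walk started at `x`:
  `S x 0 = x`, the configuration evolves by `ω_{n+1} = ω_n - δ_{S_n}`, and `S x (n+1)`
  is (a.s.) the unique point `y ≠ S x n` carrying a mark in `ω_n` that is nearest
  to `S x n`.
* `Sp`/`marksp` is the analogous greedy walk run on the configuration
  `ω⁺ = ω` restricted to `(0,∞)` plus a single mark `δ₀` at the origin. -/
structure GreedyModel where
  Ω : Type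
  [mΩ : MeasurableSpace Ω]
  P : MeasureTheory.Measure Ω
  hprob : MeasureTheory.IsProbabilityMeasure P
  p : ℝ
  hp0 : 0 < p
  hp1 : p < 1
  X : Ω → Set ℝ
  Y : Ω → Set ℝ
  hYX : ∀ ωs, Y ωs ⊆ X ωs
  /-- Palm conditioning on `0 ∈ 𝒳`: there is a point at the origin. -/
  h0X : ∀ ωs, (0 : ℝ) ∈ X ωs
  /-- The point at the origin carries two marks with probability `p`. -/
  h0Y : P {ωs | (0 : ℝ) ∈ Y ωs} = ENNReal.ofReal p
  /-- Away from the origin, the configuration is a two-mark Poisson process. -/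
  hpoisson : IsTwoMarkPoisson P (fun ωs => X ωs \ {0}) (fun ωs => Y ωs \ {0}) p
  /-- The mark at the origin is independent of the rest of the configuration. -/
  hindep0 : ∀ (m : ℕ) (A : Fin m × Bool → Set ℝ), (∀ i, MeasurableSet (A i)) →
      ProbabilityTheory.IndepFun
        ({ωs | (0 : ℝ) ∈ Y ωs}.indicator fun _ => (1 : ℕ))
        (fun ωs (k : Fin m × Bool) =>
          ptCount (if k.2 then Y ωs \ {0} else X ωs \ (Y ωs ∪ {0})) (A k)) P
  /-- The greedy walk started at `x` and the associated evolving mark configurations. -/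
  S : ℝ → ℕ → Ω → ℝ
  marks : ℝ → ℕ → Ω → ℝ → ℕ
  /-- Initially, points of `Y` carry two marks, other points of `X` carry one. -/
  hmarks0 : ∀ x ωs z, marks x 0 ωs z = (X ωs).indicator 1 z + (Y ωs).indicator 1 z
  /-- `ω_{n+1} = ω_n - δ_{S_n}`. -/
  hmarksrec : ∀ x n ωs z,
      marks x (n + 1) ωs z = marks x n ωs z - ({S x n ωs} : Set ℝ).indicator 1 z
  /-- The walk started at a point `x` of `X` starts at `x` itself. -/
  hS0 : ∀ ωs, ∀ x ∈ X ωs, S x 0 ωs = x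
  hmeasS : ∀ x n, Measurable fun ωs => S x n ωs
  /-- Almost surely, for each starting point `x ∈ X`, the walk is well defined:
  `S x (n+1)` is a point distinct from `S x n`, still carrying a mark in `ω_n`, and
  strictly closer to `S x n` than any other such point. -/
  hwalk : ∀ᵐ ωs ∂P, ∀ x ∈ X ωs, ∀ n : ℕ,
      S x (n + 1) ωs ≠ S x n ωs ∧ 1 ≤ marks x n ωs (S x (n + 1) ωs) ∧
      ∀ z : ℝ, z ≠ S x n ωs → z ≠ S x (n + 1) ωs → 1 ≤ marks x n ωs z →
        |S x (n + 1) ωs - S x n ωs| < |z - S x n ωs|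
  /-- The greedy walk on `ω⁺`. -/
  Sp : ℕ → Ω → ℝ
  marksp : ℕ → Ω → ℝ → ℕ
  hmarksp0 : ∀ ωs z, marksp 0 ωs z =
      ({0} : Set ℝ).indicator 1 z +
        (Set.Ioi (0 : ℝ)).indicator
          (fun w => (X ωs).indicator 1 w + (Y ωs).indicator 1 w) z
  hmarksprec : ∀ n ωs z,
      marksp (n + 1) ωs z = marksp n ωs z - ({Sp n ωs} : Set ℝ).indicator 1 z
  hSp0 : ∀ ωs, Sp 0 ωs = 0
  hmeasSp : ∀ n, Measurable fun ωs => Sp n ωs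
  hwalkp : ∀ᵐ ωs ∂P, ∀ n : ℕ,
      Sp (n + 1) ωs ≠ Sp n ωs ∧ 1 ≤ marksp n ωs (Sp (n + 1) ωs) ∧
      ∀ z : ℝ, z ≠ Sp n ωs → z ≠ Sp (n + 1) ωs → 1 ≤ marksp n ωs z →
        |Sp (n + 1) ωs - Sp n ωs| < |z - Sp n ωs|

attribute [instance] GreedyModel.mΩ

/-- `T_A = inf {n ≥ 1 : S_n ∈ A}`, with value `∞` (in `ℕ∞`) if the walk never enters `A`. -/
def hitTime (S : ℕ → ℝ) (A : Set ℝ) : ℕ∞ :=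
  sInf ((fun n : ℕ => (n : ℕ∞)) '' {n : ℕ | 1 ≤ n ∧ S n ∈ A})

/-- The points `X₀ = 0 < X₁ < X₂ < ⋯` of the configuration `Xs` on `[0,∞)`:
`nthPoint Xs k` is `X_k`. -/
def nthPoint (Xs : Set ℝ) : ℕ → ℝ
  | 0 => 0
  | n + 1 => sInf (Xs ∩ Set.Ioi (nthPoint Xs n))

open Classical in
/-- The observable `𝓡_y` of the paper, for the walk `S` (with evolving marks `marks`)
and `y ∈ 𝒳 ∩ (0,∞)`.  It is `0` if `T_{ℝ₋} < T_y`; otherwise, labelling the set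
`𝒳_{T_y} ∩ [0,y]` of points still carrying a mark at time `T_y` as
`0 = z_n < ⋯ < z₁ < z₀ = y`, it is `max {y - z_j : y - z_j > 2 (y - z_{j-1})}`
(the predecessor `z_{j-1}` of a point `z_j` of the configuration being the `sInf` of the
part of the configuration strictly above `z_j`). -/
def RScript (marks : ℕ → ℝ → ℕ) (S : ℕ → ℝ) (y : ℝ) : ℝ :=
  if hitTime S (Set.Iio 0) < hitTime S {y} then 0
  else
    let Z : Set ℝ := {z : ℝ | 1 ≤ marks (hitTime S {y}).toNat z} ∩ Set.Icc 0 y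
    sSup {d : ℝ | ∃ z ∈ Z, d = y - z ∧ y - z > 2 * (y - sInf (Z ∩ Set.Ioi z))}


/-- The removal time `𝒯ᴿ_x = min {n ≥ 0 : ω⁺_{n+1}(x) = 0}` of the point `x` for the
greedy walk on `ω⁺` (with value `∞` if `x` is never cleared). -/
def TRtime (M : GreedyModel) (ωs : M.Ω) (x : ℝ) : ℕ∞ :=
  sInf ((fun n : ℕ => (n : ℕ∞)) '' {n : ℕ | M.marksp (n + 1) ωs x = 0})

/-- `ℓ(x) = max_{0 ≤ n ≤ 𝒯ᴿ_x} Sₙ - x`, the maximal displacement of the `ω⁺`-walk to the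
right of `x` up to the removal time of `x` (a junk value if `𝒯ᴿ_x = ∞`). -/
def ellReal (M : GreedyModel) (ωs : M.Ω) (x : ℝ) : ℝ :=
  sSup {d : ℝ | ∃ n : ℕ, n ≤ (TRtime M ωs x).toNat ∧ d = M.Sp n ωs - x}

/-- `ξ(x)`: the gap between `x + ℓ(x)` and the next point of `𝒳` strictly to its right. -/
def xiReal (M : GreedyModel) (ωs : M.Ω) (x : ℝ) : ℝ :=
  sInf (M.X ωs ∩ Set.Ioi (x + ellReal M ωs x)) - (x + ellReal M ωs x)

/-- `L(x) = ℓ(x) + ξ(x) ∈ [0,∞]`, with `L(x) = ∞` when `𝒯ᴿ_x = ∞`. -/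
def LGap (M : GreedyModel) (ωs : M.Ω) (x : ℝ) : ℝ≥0∞ :=
  if TRtime M ωs x < ⊤ then ENNReal.ofReal (ellReal M ωs x + xiReal M ωs x) else ⊤

/-- The renewal positions: `posSeq k = L₀ + L₁ + ⋯ + L_{k-1}` where `L₀ = L(0)` and
`L_{k+1} = L(L₀ + ⋯ + L_k)` (the recursion being stopped at the value `∞`). -/
def posSeq (M : GreedyModel) (ωs : M.Ω) : ℕ → ℝ≥0∞
  | 0 => 0
  | k + 1 =>
      if posSeq M ωs k < ⊤ then
        posSeq M ωs k + LGap M ωs (posSeq M ωs k).toReal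
      else ⊤

/-- The renewal lengths: `LSeq k = L_k = L(L₀ + ⋯ + L_{k-1})`. -/
def LSeq (M : GreedyModel) (ωs : M.Ω) (k : ℕ) : ℝ≥0∞ :=
  if posSeq M ωs k < ⊤ then LGap M ωs (posSeq M ωs k).toReal else ⊤

namespace GWAux

open Set

variable {M : GreedyModel} {w : M.Ω}

/-- The deterministic "good configuration" hypotheses, which hold almost surely. -/
structure Good (M : GreedyModel) (w : M.Ω) : Prop where
  fin : ∀ r : ℝ, (M.X w ∩ Set.Icc (-r) r).Finite
  unb : ∀ t : ℝ, (M.X w ∩ Set.Ioi t).Nonempty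
  walk : ∀ n : ℕ, M.S 0 (n+1) w ≠ M.S 0 n w ∧ 1 ≤ M.marks 0 n w (M.S 0 (n+1) w) ∧
      ∀ z : ℝ, z ≠ M.S 0 n w → z ≠ M.S 0 (n+1) w → 1 ≤ M.marks 0 n w z →
        |M.S 0 (n+1) w - M.S 0 n w| < |z - M.S 0 n w|
  walkp : ∀ n : ℕ, M.Sp (n+1) w ≠ M.Sp n w ∧ 1 ≤ M.marksp n w (M.Sp (n+1) w) ∧
      ∀ z : ℝ, z ≠ M.Sp n w → z ≠ M.Sp (n+1) w → 1 ≤ M.marksp n w z →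
        |M.Sp (n+1) w - M.Sp n w| < |z - M.Sp n w|

lemma sp0 : M.Sp 0 w = 0 := M.hSp0 w

lemma mu_succ_ne {n : ℕ} {z : ℝ} (h : z ≠ M.Sp n w) :
    M.marksp (n+1) w z = M.marksp n w z := by
  rw [M.hmarksprec, Set.indicator_of_notMem (by simpa using h), Nat.sub_zero]

lemma mu_succ_self {n : ℕ} :
    M.marksp (n+1) w (M.Sp n w) = M.marksp n w (M.Sp n w) - 1 := by
  rw [M.hmarksprec, Set.indicator_of_mem (Set.mem_singleton _)]
  rfl

lemma mu_succ_le {n : ℕ} {z : ℝ} : M.marksp (n+1) w z ≤ M.marksp n w z := by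
  rw [M.hmarksprec]; exact Nat.sub_le _ _

lemma mu_anti {z : ℝ} : Antitone fun n => M.marksp n w z :=
  antitone_nat_of_succ_le fun n => mu_succ_le

lemma mu_zero_origin : M.marksp 0 w 0 = 1 := by
  rw [M.hmarksp0]
  rw [Set.indicator_of_mem (Set.mem_singleton _), Set.indicator_of_notMem (by simp)]
  rfl

lemma mu_zero_pos_mem {z : ℝ} (hz : 0 < z) (hzX : z ∈ M.X w) :
    1 ≤ M.marksp 0 w z ∧ M.marksp 0 w z ≤ 2 := by
  rw [M.hmarksp0, Set.indicator_of_notMem (by simp [ne_of_gt hz]),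
    Set.indicator_of_mem (Set.mem_Ioi.2 hz)]
  constructor
  · have : (M.X w).indicator (1 : ℝ → ℕ) z = 1 := Set.indicator_of_mem hzX 1
    simp [this]
  · have h1 : (M.X w).indicator (1 : ℝ → ℕ) z ≤ 1 := Set.indicator_le_self' (by simp) z
    have h2 : (M.Y w).indicator (1 : ℝ → ℕ) z ≤ 1 := Set.indicator_le_self' (by simp) z
    omega

lemma mu_zero_eq_zero {z : ℝ} (hz : z ≠ 0) (hzX : z ∉ M.X w ∨ ¬ 0 < z) :
    M.marksp 0 w z = 0 := by
  rw [M.hmarksp0, Set.indicator_of_notMem (by simpa using hz)]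
  rcases hzX with h | h
  · rcases le_or_gt z 0 with h0 | h0
    · rw [Set.indicator_of_notMem (by simpa using h0)]; rfl
    · rw [Set.indicator_of_mem (Set.mem_Ioi.2 h0), Set.indicator_of_notMem h,
        Set.indicator_of_notMem (fun hY => h (M.hYX w hY))]
      rfl
  · rw [Set.indicator_of_notMem (by simpa using le_of_not_gt h)]
    rfl

lemma mu_supp {n : ℕ} {z : ℝ} (h : 1 ≤ M.marksp n w z) :
    z = 0 ∨ (z ∈ M.X w ∧ 0 < z) := by
  by_contra hc
  push_neg at hc
  have h0 : M.marksp 0 w z = 0 := by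
    refine mu_zero_eq_zero hc.1 ?_
    by_cases hX : z ∈ M.X w
    · exact Or.inr (not_lt.2 (hc.2 hX))
    · exact Or.inl hX
  have h1 := mu_anti (M := M) (w := w) (z := z) (Nat.zero_le n)
  simp only at h1
  omega

lemma mu_le_two {n : ℕ} {z : ℝ} : M.marksp n w z ≤ 2 := by
  have h := mu_anti (M := M) (w := w) (z := z) (Nat.zero_le n)
  simp only at h
  have h0 : M.marksp 0 w z ≤ 2 := by
    by_cases hz : z = 0
    · subst hz; rw [mu_zero_origin]; omega
    · by_cases hX : z ∈ M.X w ∧ 0 < z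
      · exact (mu_zero_pos_mem hX.2 hX.1).2
      · rw [mu_zero_eq_zero hz (by tauto)]; omega
  omega

lemma mu_unvisited {n : ℕ} {z : ℝ} (h : ∀ j < n, M.Sp j w ≠ z) :
    M.marksp n w z = M.marksp 0 w z := by
  induction n with
  | zero => rfl
  | succ n ih =>
      rw [mu_succ_ne (fun hz => h n (Nat.lt_succ_self n) hz.symm)]
      exact ih fun j hj => h j (hj.trans (Nat.lt_succ_self n))

lemma mu_visit_of_lt {n : ℕ} {z : ℝ} (h : M.marksp (n+1) w z ≠ M.marksp n w z) :
    M.Sp n w = z := by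
  by_contra hc
  exact h (mu_succ_ne fun hz => hc hz.symm)

/-- marks (`mk`) analogues for the walk on the full configuration started at `0`. -/
lemma mk_succ_ne {n : ℕ} {z : ℝ} (h : z ≠ M.S 0 n w) :
    M.marks 0 (n+1) w z = M.marks 0 n w z := by
  rw [M.hmarksrec, Set.indicator_of_notMem (by simpa using h), Nat.sub_zero]

lemma mk_succ_self {n : ℕ} :
    M.marks 0 (n+1) w (M.S 0 n w) = M.marks 0 n w (M.S 0 n w) - 1 := by
  rw [M.hmarksrec, Set.indicator_of_mem (Set.mem_singleton _)]
  rfl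

lemma mk_zero_origin (h0Y : (0:ℝ) ∈ M.Y w) : M.marks 0 0 w 0 = 2 := by
  rw [M.hmarks0, Set.indicator_of_mem (M.h0X w), Set.indicator_of_mem h0Y]
  rfl

lemma s_zero : M.S 0 0 w = 0 := M.hS0 w 0 (M.h0X w)

/-- The next point of the configuration strictly to the right of `t`. -/
def nxt (M : GreedyModel) (w : M.Ω) (t : ℝ) : ℝ := sInf (M.X w ∩ Set.Ioi t)

lemma nxt_isLeast (hG : Good M w) (t : ℝ) : IsLeast (M.X w ∩ Set.Ioi t) (nxt M w t) := by
  obtain ⟨a, haX, hat⟩ := hG.unb t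
  have hat' : t < a := hat
  have hfin : (M.X w ∩ Set.Ioc t a).Finite := by
    refine (hG.fin (|t| + |a|)).subset ?_
    rintro z ⟨hz, hz1, hz2⟩
    refine ⟨hz, ?_, ?_⟩
    · have h1 := neg_abs_le t; have h2 := abs_nonneg a; linarith
    · have h1 := le_abs_self a; have h2 := abs_nonneg t; linarith
  have hne : (M.X w ∩ Set.Ioc t a).Nonempty := ⟨a, haX, hat', le_refl a⟩
  have hFne : hfin.toFinset.Nonempty := by
    rw [Set.Finite.toFinset_nonempty]; exact hne
  have hleast : IsLeast (M.X w ∩ Set.Ioi t) (hfin.toFinset.min' hFne) := by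
    have hmem : hfin.toFinset.min' hFne ∈ M.X w ∩ Set.Ioc t a := by
      have := hfin.toFinset.min'_mem hFne
      simpa using this
    refine ⟨⟨hmem.1, hmem.2.1⟩, ?_⟩
    rintro b ⟨hbX, hbt⟩
    rcases le_or_gt b a with hba | hba
    · exact hfin.toFinset.min'_le b (by simp only [Set.Finite.mem_toFinset]; exact ⟨hbX, hbt, hba⟩)
    · exact le_trans hmem.2.2 hba.le
  have he : nxt M w t = hfin.toFinset.min' hFne := hleast.csInf_eq
  rw [he]; exact hleast

/-- The running maximum of the walk on `ω⁺`. -/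
def Mx (M : GreedyModel) (w : M.Ω) : ℕ → ℝ
  | 0 => M.Sp 0 w
  | n + 1 => max (Mx M w n) (M.Sp (n+1) w)

lemma le_Mx {j n : ℕ} (h : j ≤ n) : M.Sp j w ≤ Mx M w n := by
  induction n with
  | zero =>
      have : j = 0 := Nat.le_zero.1 h
      subst this; exact le_of_eq rfl
  | succ n ih =>
      show M.Sp j w ≤ max (Mx M w n) (M.Sp (n+1) w)
      rcases eq_or_lt_of_le h with h' | h'
      · subst h'; exact le_max_right _ _
      · exact le_trans (ih (Nat.lt_succ_iff.1 h')) (le_max_left _ _)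

lemma Mx_mem (n : ℕ) : ∃ j, j ≤ n ∧ Mx M w n = M.Sp j w := by
  induction n with
  | zero => exact ⟨0, le_refl 0, rfl⟩
  | succ n ih =>
      obtain ⟨j, hj, he⟩ := ih
      rcases max_cases (Mx M w n) (M.Sp (n+1) w) with ⟨h1, _⟩ | ⟨h1, _⟩
      · exact ⟨j, hj.trans (Nat.le_succ n), by rw [show Mx M w (n+1) = max (Mx M w n) (M.Sp (n+1) w) from rfl, h1, he]⟩
      · exact ⟨n+1, le_refl _, by rw [show Mx M w (n+1) = max (Mx M w n) (M.Sp (n+1) w) from rfl, h1]⟩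

lemma Mx_succ (n : ℕ) : Mx M w (n+1) = max (Mx M w n) (M.Sp (n+1) w) := rfl

lemma Mx_zero : Mx M w 0 = 0 := sp0

lemma Mx_nonneg (n : ℕ) : 0 ≤ Mx M w n := by
  have h := le_Mx (M := M) (w := w) (Nat.zero_le n)
  rwa [sp0] at h

lemma sp_mem (hG : Good M w) (n : ℕ) : M.Sp n w = 0 ∨ (M.Sp n w ∈ M.X w ∧ 0 < M.Sp n w) := by
  cases n with
  | zero => exact Or.inl sp0
  | succ n => exact mu_supp (hG.walkp n).2.1

/-- A new record of the `ω⁺`-walk is the next point of `𝒳` after the old record. -/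
lemma record (hG : Good M w) {n : ℕ} (h : Mx M w n < M.Sp (n+1) w) :
    M.Sp (n+1) w = nxt M w (Mx M w n) := by
  have hpos : 0 < M.Sp (n+1) w := lt_of_le_of_lt (Mx_nonneg n) h
  have hmemX : M.Sp (n+1) w ∈ M.X w := by
    rcases sp_mem hG (n+1) with h0 | h'
    · exact absurd h0 (by linarith)
    · exact h'.1
  have hL := nxt_isLeast hG (Mx M w n)
  have hle : nxt M w (Mx M w n) ≤ M.Sp (n+1) w := hL.2 ⟨hmemX, h⟩
  rcases eq_or_lt_of_le hle with he | hlt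
  · exact he.symm
  · exfalso
    set z := nxt M w (Mx M w n) with hz
    have hzX : z ∈ M.X w := hL.1.1
    have hzgt : Mx M w n < z := hL.1.2
    have hzpos : 0 < z := lt_of_le_of_lt (Mx_nonneg n) hzgt
    have hunv : ∀ j < n+1, M.Sp j w ≠ z := by
      intro j hj hc
      exact absurd (hc ▸ le_Mx (Nat.lt_succ_iff.1 hj)) (not_le.2 hzgt)
    have hμ : 1 ≤ M.marksp n w z := by
      rw [mu_unvisited (fun j hj => hunv j (hj.trans (Nat.lt_succ_self n)))]
      exact (mu_zero_pos_mem hzpos hzX).1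
    have h1 : M.Sp n w ≤ Mx M w n := le_Mx (le_refl n)
    have hnear := (hG.walkp n).2.2 z
      (fun he => (not_le.2 hzgt) (he ▸ le_Mx (le_refl n))) (ne_of_lt hlt) hμ
    rw [abs_of_pos (by linarith), abs_of_pos (by linarith)] at hnear
    linarith

/-- Every point of `𝒳` below the running maximum has been visited. -/
lemma visited (hG : Good M w) (n : ℕ) {z : ℝ} (hX : z ∈ M.X w) (hz : 0 < z)
    (hle : z ≤ Mx M w n) : ∃ j, j ≤ n ∧ M.Sp j w = z := by
  induction n with
  | zero => rw [Mx_zero] at hle; linarith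
  | succ n ih =>
      by_cases h' : z ≤ Mx M w n
      · obtain ⟨j, hj, he⟩ := ih h'
        exact ⟨j, hj.trans (Nat.le_succ n), he⟩
      · push_neg at h'
        have hsp : z ≤ M.Sp (n+1) w := by
          rw [Mx_succ] at hle
          rcases max_cases (Mx M w n) (M.Sp (n+1) w) with ⟨h1, _⟩ | ⟨h1, h2⟩
          · rw [h1] at hle; linarith
          · rw [h1] at hle; exact hle
        have hrec : Mx M w n < M.Sp (n+1) w := lt_of_lt_of_le h' hsp
        have heq := record hG hrec
        have hL := nxt_isLeast hG (Mx M w n)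
        have hge : nxt M w (Mx M w n) ≤ z := hL.2 ⟨hX, h'⟩
        exact ⟨n+1, le_refl _, le_antisymm (by rw [heq]; exact hge) hsp⟩

lemma TR_eq {x : ℝ} (hex : ∃ n, M.marksp (n+1) w x = 0) :
    TRtime M w x = (Nat.find hex : ℕ∞) := by
  have hL : IsLeast ((fun n : ℕ => (n : ℕ∞)) '' {n | M.marksp (n+1) w x = 0})
      (Nat.find hex : ℕ∞) := by
    constructor
    · exact ⟨Nat.find hex, Nat.find_spec hex, rfl⟩
    · rintro b ⟨k, hk, rfl⟩
      show (Nat.find hex : ℕ∞) ≤ (k : ℕ∞)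
      exact_mod_cast Nat.find_min' hex hk
  exact hL.csInf_eq

lemma TR_toNat {x : ℝ} (hex : ∃ n, M.marksp (n+1) w x = 0) :
    (TRtime M w x).toNat = Nat.find hex := by
  rw [TR_eq hex]; rfl

lemma TR_lt_top {x : ℝ} (hex : ∃ n, M.marksp (n+1) w x = 0) :
    TRtime M w x < ⊤ := by
  rw [TR_eq hex]; exact ENat.coe_lt_top _

lemma TR_top {x : ℝ} (h : ¬ ∃ n, M.marksp (n+1) w x = 0) : TRtime M w x = ⊤ := by
  have he : {n : ℕ | M.marksp (n+1) w x = 0} = ∅ := by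
    ext n; simp only [Set.mem_setOf_eq, Set.mem_empty_iff_false, iff_false]
    exact fun hc => h ⟨n, hc⟩
  rw [TRtime, he, Set.image_empty, sInf_empty]

lemma sp_TR {x : ℝ} (hex : ∃ n, M.marksp (n+1) w x = 0) (h0 : 1 ≤ M.marksp 0 w x) :
    M.Sp (Nat.find hex) w = x ∧ M.marksp (Nat.find hex + 1) w x = 0 ∧
      1 ≤ M.marksp (Nat.find hex) w x := by
  have hspec : M.marksp (Nat.find hex + 1) w x = 0 := Nat.find_spec hex
  have hpos : 1 ≤ M.marksp (Nat.find hex) w x := by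
    rcases Nat.eq_zero_or_pos (Nat.find hex) with h | h
    · rw [h]; exact h0
    · obtain ⟨t', ht'⟩ := Nat.exists_eq_add_of_lt h
      simp only [Nat.zero_add] at ht'
      have hmin := Nat.find_min hex (show t' < Nat.find hex by omega)
      rw [show Nat.find hex = t' + 1 from by omega]
      omega
  exact ⟨mu_visit_of_lt (by omega), hspec, hpos⟩

lemma ell_eq (x : ℝ) : ellReal M w x = Mx M w ((TRtime M w x).toNat) - x := by
  have hgr : IsGreatest {d : ℝ | ∃ n : ℕ, n ≤ (TRtime M w x).toNat ∧ d = M.Sp n w - x}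
      (Mx M w ((TRtime M w x).toNat) - x) := by
    constructor
    · obtain ⟨j, hj, he⟩ := Mx_mem (M := M) (w := w) ((TRtime M w x).toNat)
      exact ⟨j, hj, by rw [he]⟩
    · rintro d ⟨n, hn, rfl⟩
      have := le_Mx (M := M) (w := w) hn
      linarith
  exact hgr.csSup_eq

/-- During a phase started at the clearing time of `x`, every point of the old explored
territory carries at most one mark. -/
lemma one_mark (hG : Good M w) (T : ℕ) (x : ℝ) (hx0 : 0 ≤ x)
    (hspT : M.Sp T w = x) (hclear : ∀ z < x, M.marksp T w z = 0)
    (hx1 : M.marksp (T+1) w x = 0) :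
    ∀ n, T ≤ n → ∀ z, z ≤ Mx M w T → M.marksp n w z ≤ 1 := by
  have base : ∀ z, z ≤ Mx M w T → M.marksp T w z ≤ 1 := by
    intro z hzle
    rcases lt_trichotomy z x with h | h | h
    · rw [hclear z h]; omega
    · have hss := mu_succ_self (M := M) (w := w) (n := T)
      rw [hspT] at hss
      rw [h]; omega
    · by_cases hm : 1 ≤ M.marksp T w z
      · rcases mu_supp hm with h0 | ⟨hX, hpos⟩
        · exfalso; rw [h0] at h; linarith
        · obtain ⟨j, hj, hjsp⟩ := visited hG T hX hpos hzle
          have hjT : j ≠ T := by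
            intro hc; rw [hc, hspT] at hjsp; exact (ne_of_gt h) hjsp.symm
          have hjlt : j < T := lt_of_le_of_ne hj hjT
          have hss := mu_succ_self (M := M) (w := w) (n := j)
          rw [hjsp] at hss
          have h2 := mu_le_two (M := M) (w := w) (n := j) (z := z)
          have h3 := mu_anti (M := M) (w := w) (z := z) (show j+1 ≤ T by omega)
          simp only at h3
          omega
      · omega
  intro n hn z hz
  have h := mu_anti (M := M) (w := w) (z := z) hn
  simp only at h
  exact le_trans h (base z hz)

/-- Phase clearing: at any visit to the next renewal point `nxt (Mx T)` after time `T`,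
every point strictly below it has been cleared. -/
lemma phase_clear (hG : Good M w) (T : ℕ) (x : ℝ) (hx0 : 0 ≤ x)
    (hspT : M.Sp T w = x) (hclear : ∀ z < x, M.marksp T w z = 0)
    (hx1 : M.marksp (T+1) w x = 0) :
    ∀ n, T < n → M.Sp n w = nxt M w (Mx M w T) →
      ∀ z < nxt M w (Mx M w T), M.marksp n w z = 0 := by
  set r' := nxt M w (Mx M w T) with hr'
  have hrM : Mx M w T < r' := (nxt_isLeast hG _).1.2
  have hone := one_mark hG T x hx0 hspT hclear hx1
  have loop : ∀ n, T ≤ n → (∀ j, T < j → j ≤ n → M.Sp j w ≠ r') →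
      ((∀ z < M.Sp n w, M.marksp n w z = 0) ∧ M.Sp n w ≤ Mx M w T ∧
        Mx M w n = Mx M w T) := by
    intro n hTn
    induction n, hTn using Nat.le_induction with
    | base =>
        intro _
        refine ⟨by rw [hspT]; exact hclear, le_Mx (le_refl T), rfl⟩
    | succ n hTn ih =>
        intro hnv
        obtain ⟨ihc, ihle, ihMx⟩ := ih (fun j h1 h2 => hnv j h1 (h2.trans (Nat.le_succ n)))
        have h1 : M.Sp (n+1) w ≤ Mx M w T := by
          by_contra hc; push_neg at hc
          have hrec : Mx M w n < M.Sp (n+1) w := by rw [ihMx]; exact hc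
          have heq := record hG hrec
          rw [ihMx] at heq
          exact hnv (n+1) (Nat.lt_succ_of_le hTn) (le_refl _) heq
        have hMx1 : Mx M w (n+1) = Mx M w T := by
          rw [Mx_succ, ihMx]; exact max_eq_left h1
        have hlt : M.Sp n w < M.Sp (n+1) w := by
          rcases lt_or_gt_of_ne (hG.walkp n).1 with h | h
          · exfalso
            have hm := (hG.walkp n).2.1
            have := ihc _ h
            omega
          · exact h
        refine ⟨?_, h1, hMx1⟩
        intro z hz
        rcases lt_trichotomy z (M.Sp n w) with h | h | h
        · rw [mu_succ_ne (ne_of_lt h)]; exact ihc z h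
        · have hom := hone n hTn (M.Sp n w) ihle
          have hss := mu_succ_self (M := M) (w := w) (n := n)
          rw [h]; omega
        · have hne1 : z ≠ M.Sp n w := ne_of_gt h
          have hne2 : z ≠ M.Sp (n+1) w := ne_of_lt hz
          by_cases hm : 1 ≤ M.marksp n w z
          · exfalso
            have hnear := (hG.walkp n).2.2 z hne1 hne2 hm
            rw [abs_of_pos (by linarith), abs_of_pos (by linarith)] at hnear
            linarith
          · rw [mu_succ_ne hne1]; omega
  intro n hn hsp
  have vex : ∃ j, T < j ∧ M.Sp j w = r' := ⟨n, hn, hsp⟩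
  have hvspec := Nat.find_spec vex
  set v := Nat.find vex with hvdef
  obtain ⟨hvT, hvsp⟩ := hvspec
  have hvn : v ≤ n := Nat.find_min' vex ⟨hn, hsp⟩
  have hveq : v - 1 + 1 = v := by omega
  obtain ⟨cl, hle, hMxe⟩ := loop (v-1) (by omega) (fun j h1 h2 hc =>
    Nat.find_min vex (show j < v by omega) ⟨h1, hc⟩)
  have claim : ∀ z < r', M.marksp v w z = 0 := by
    intro z hz
    have hsplt : M.Sp (v-1) w < r' := lt_of_le_of_lt hle hrM
    rcases lt_trichotomy z (M.Sp (v-1) w) with h | h | h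
    · rw [← hveq, mu_succ_ne (ne_of_lt h)]; exact cl z h
    · have hom := hone (v-1) (by omega) (M.Sp (v-1) w) hle
      have hss := mu_succ_self (M := M) (w := w) (n := v-1)
      rw [hveq] at hss
      rw [h]; omega
    · have hne2 : z ≠ M.Sp v w := by rw [hvsp]; exact ne_of_lt hz
      by_cases hm : 1 ≤ M.marksp (v-1) w z
      · exfalso
        have hnear := (hG.walkp (v-1)).2.2 z (ne_of_gt h)
          (by rw [hveq]; exact hne2) hm
        rw [hveq, hvsp] at hnear
        rw [abs_of_pos (by linarith), abs_of_pos (by linarith)] at hnear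
        linarith
      · rw [← hveq, mu_succ_ne (ne_of_gt h)]; omega
  intro z hz
  have hmono := mu_anti (M := M) (w := w) (z := z) hvn
  simp only at hmono
  have := claim z hz
  omega

/-- The real renewal positions. -/
def rho (M : GreedyModel) (w : M.Ω) (k : ℕ) : ℝ := (posSeq M w k).toReal

/-- The clearing time of the `k`-th renewal position. -/
def tk (M : GreedyModel) (w : M.Ω) (k : ℕ) : ℕ := (TRtime M w (rho M w k)).toNat

lemma rho_nonneg (k : ℕ) : 0 ≤ rho M w k := ENNReal.toReal_nonneg

lemma posSeq_zero : posSeq M w 0 = 0 := rfl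

lemma posSeq_succ (k : ℕ) : posSeq M w (k+1) =
    if posSeq M w k < ⊤ then posSeq M w k + LGap M w (rho M w k) else ⊤ := rfl

lemma rho_zero : rho M w 0 = 0 := by
  rw [rho, posSeq_zero]; rfl

/-- The invariant carried along the renewal sequence. -/
structure RInv (M : GreedyModel) (w : M.Ω) (k : ℕ) : Prop where
  fin : posSeq M w k ≠ ⊤
  hex : ∃ n, M.marksp (n+1) w (rho M w k) = 0
  mem : rho M w k = 0 ∨ (rho M w k ∈ M.X w ∧ 0 < rho M w k)
  clear : ∀ z < rho M w k, M.marksp (tk M w k) w z = 0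

lemma RInv.mu0 {k : ℕ} (hk : RInv M w k) : 1 ≤ M.marksp 0 w (rho M w k) := by
  rcases hk.mem with h | ⟨hX, hpos⟩
  · rw [h, mu_zero_origin]
  · exact (mu_zero_pos_mem hpos hX).1

lemma RInv.sp_tk {k : ℕ} (hk : RInv M w k) :
    M.Sp (tk M w k) w = rho M w k ∧ M.marksp (tk M w k + 1) w (rho M w k) = 0 := by
  have h := sp_TR hk.hex hk.mu0
  rw [tk, TR_toNat hk.hex]
  exact ⟨h.1, h.2.1⟩

lemma RInv.rho_le_Mx {k : ℕ} (hk : RInv M w k) : rho M w k ≤ Mx M w (tk M w k) := by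
  have h := le_Mx (M := M) (w := w) (le_refl (tk M w k))
  rwa [hk.sp_tk.1] at h

lemma ell_xi (hG : Good M w) {k : ℕ} (hk : RInv M w k) :
    ellReal M w (rho M w k) + xiReal M w (rho M w k) =
        nxt M w (Mx M w (tk M w k)) - rho M w k ∧
      0 < ellReal M w (rho M w k) + xiReal M w (rho M w k) := by
  have he : ellReal M w (rho M w k) = Mx M w (tk M w k) - rho M w k := ell_eq _
  have hxi : xiReal M w (rho M w k) =
      nxt M w (Mx M w (tk M w k)) - Mx M w (tk M w k) := by
    rw [xiReal, he, show rho M w k + (Mx M w (tk M w k) - rho M w k) = Mx M w (tk M w k)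
      from by ring]
    rfl
  constructor
  · rw [he, hxi]; ring
  · rw [he, hxi]
    have h1 := hk.rho_le_Mx
    have h2 : Mx M w (tk M w k) < nxt M w (Mx M w (tk M w k)) := (nxt_isLeast hG _).1.2
    linarith

lemma posSeq_succ_eq (hG : Good M w) {k : ℕ} (hk : RInv M w k) :
    posSeq M w (k+1) = posSeq M w k +
      ENNReal.ofReal (ellReal M w (rho M w k) + xiReal M w (rho M w k)) := by
  rw [posSeq_succ, if_pos (lt_top_iff_ne_top.2 hk.fin)]
  congr 1
  show LGap M w (rho M w k) = _
  rw [LGap, if_pos (TR_lt_top hk.hex)]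

lemma rho_succ_eq (hG : Good M w) {k : ℕ} (hk : RInv M w k) :
    rho M w (k+1) = rho M w k +
      (ellReal M w (rho M w k) + xiReal M w (rho M w k)) := by
  rw [rho, posSeq_succ_eq hG hk, ENNReal.toReal_add hk.fin ENNReal.ofReal_ne_top,
    ENNReal.toReal_ofReal (le_of_lt (ell_xi hG hk).2)]
  rfl

lemma posSeq_succ_fin (hG : Good M w) {k : ℕ} (hk : RInv M w k) :
    posSeq M w (k+1) ≠ ⊤ := by
  rw [posSeq_succ_eq hG hk]
  exact ENNReal.add_ne_top.2 ⟨hk.fin, ENNReal.ofReal_ne_top⟩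

lemma rho_succ_nxt (hG : Good M w) {k : ℕ} (hk : RInv M w k) :
    rho M w (k+1) = nxt M w (Mx M w (tk M w k)) := by
  rw [rho_succ_eq hG hk, (ell_xi hG hk).1]; ring

lemma rho_succ_mem (hG : Good M w) {k : ℕ} (hk : RInv M w k) :
    rho M w (k+1) ∈ M.X w ∧ 0 < rho M w (k+1) ∧ Mx M w (tk M w k) < rho M w (k+1) := by
  have h := (nxt_isLeast hG (Mx M w (tk M w k))).1
  rw [← rho_succ_nxt hG hk] at h
  exact ⟨h.1, lt_of_le_of_lt (Mx_nonneg _) h.2, h.2⟩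

/-- The main renewal invariant, assuming no exceptional renewal ever occurs. -/
lemma rinv (hG : Good M w) (H : ∀ k, LSeq M w (k+1) ≤ posSeq M w (k+1)) :
    ∀ k, RInv M w k := by
  intro k
  induction k with
  | zero =>
      refine ⟨by rw [posSeq_zero]; exact ENNReal.zero_ne_top, ?_, Or.inl rho_zero, ?_⟩
      · refine ⟨0, ?_⟩
        have hss := mu_succ_self (M := M) (w := w) (n := 0)
        rw [sp0] at hss
        rw [rho_zero, hss, mu_zero_origin]
      · intro z hz
        rw [rho_zero] at hz
        have h0 : M.marksp 0 w z = 0 :=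
          mu_zero_eq_zero (ne_of_lt hz) (Or.inr (not_lt.2 (le_of_lt hz)))
        have h := mu_anti (M := M) (w := w) (z := z) (Nat.zero_le (tk M w 0))
        simp only at h
        omega
  | succ k ih =>
      have hfin1 : posSeq M w (k+1) ≠ ⊤ := posSeq_succ_fin hG ih
      have hr' := rho_succ_nxt hG ih
      obtain ⟨hX', hpos', hMx'⟩ := rho_succ_mem hG ih
      have hex' : ∃ n, M.marksp (n+1) w (rho M w (k+1)) = 0 := by
        by_contra hc
        have htop := TR_top hc
        have hL : LSeq M w (k+1) = ⊤ := by
          rw [LSeq, if_pos (lt_top_iff_ne_top.2 hfin1)]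
          show LGap M w (rho M w (k+1)) = ⊤
          rw [LGap, if_neg (by rw [htop]; exact lt_irrefl ⊤)]
        have hle := H k
        rw [hL] at hle
        exact hfin1 (top_le_iff.1 hle)
      refine ⟨hfin1, hex', Or.inr ⟨hX', hpos'⟩, ?_⟩
      -- the clearing property at time `tk (k+1)`
      have hsp' := sp_TR hex' (mu_zero_pos_mem hpos' hX').1
      have htk' : tk M w (k+1) = Nat.find hex' := by rw [tk, TR_toNat hex']
      have hT := ih.sp_tk
      -- `rho (k+1)` is not visited before `tk k + 1`
      have ht'T : tk M w k < tk M w (k+1) := by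
        rw [htk']
        by_contra hc
        push_neg at hc
        have hunv : ∀ i < Nat.find hex' + 1, M.Sp i w ≠ rho M w (k+1) := by
          intro i hi hceq
          have : M.Sp i w ≤ Mx M w (tk M w k) := le_Mx (by omega)
          rw [hceq] at this
          exact absurd this (not_le.2 hMx')
        have h1 : M.marksp (Nat.find hex' + 1) w (rho M w (k+1)) =
            M.marksp 0 w (rho M w (k+1)) := mu_unvisited hunv
        have h2 := Nat.find_spec hex'
        have h3 := (mu_zero_pos_mem hpos' hX').1
        omega
      have hsp'' : M.Sp (tk M w (k+1)) w = nxt M w (Mx M w (tk M w k)) := by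
        rw [htk', hsp'.1, hr']
      have hcl := phase_clear hG (tk M w k) (rho M w k) (rho_nonneg k) hT.1 ih.clear hT.2
        (tk M w (k+1)) ht'T hsp''
      intro z hz
      rw [hr'] at hz
      exact hcl z hz

lemma rho_ratio (hG : Good M w) (H : ∀ k, LSeq M w (k+1) ≤ posSeq M w (k+1))
    (k : ℕ) (hk1 : 1 ≤ k) : rho M w (k+1) ≤ 2 * rho M w k := by
  have hinv := rinv hG H
  obtain ⟨k', rfl⟩ : ∃ k', k = k' + 1 := ⟨k - 1, by omega⟩
  have hle := H k'
  have hLk : LSeq M w (k'+1) = ENNReal.ofReal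
      (ellReal M w (rho M w (k'+1)) + xiReal M w (rho M w (k'+1))) := by
    rw [LSeq, if_pos (lt_top_iff_ne_top.2 (hinv (k'+1)).fin)]
    show LGap M w (rho M w (k'+1)) = _
    rw [LGap, if_pos (TR_lt_top (hinv (k'+1)).hex)]
  have hps : posSeq M w (k'+1) = ENNReal.ofReal (rho M w (k'+1)) :=
    (ENNReal.ofReal_toReal (hinv (k'+1)).fin).symm
  rw [hLk, hps] at hle
  have h1 : ellReal M w (rho M w (k'+1)) + xiReal M w (rho M w (k'+1)) ≤ rho M w (k'+1) :=
    (ENNReal.ofReal_le_ofReal_iff (rho_nonneg _)).1 hle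
  have h2 := rho_succ_eq hG (hinv (k'+1))
  linarith

lemma rho_strictMono (hG : Good M w) (H : ∀ k, LSeq M w (k+1) ≤ posSeq M w (k+1)) :
    StrictMono (rho M w) := by
  refine strictMono_nat_of_lt_succ fun k => ?_
  have h2 := rho_succ_eq hG (rinv hG H k)
  have h3 := (ell_xi hG (rinv hG H k)).2
  linarith

lemma rho_unbounded (hG : Good M w) (H : ∀ k, LSeq M w (k+1) ≤ posSeq M w (k+1)) :
    ∀ B : ℝ, ∃ k, B < rho M w k := by
  intro B
  by_contra hcon; push_neg at hcon
  have hinj : Function.Injective (rho M w) := (rho_strictMono hG H).injective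
  have hB0 : 0 ≤ B := le_trans (rho_nonneg 0) (hcon 0)
  have hsub : Set.range (rho M w) ⊆ insert 0 (M.X w ∩ Set.Icc (-B) B) := by
    rintro _ ⟨k, rfl⟩
    rcases (rinv hG H k).mem with h | ⟨hX, hp⟩
    · rw [h]; exact Set.mem_insert _ _
    · refine Set.mem_insert_of_mem _ ⟨hX, ?_, hcon k⟩
      have := rho_nonneg (M := M) (w := w) k
      linarith
  have hfin : (Set.range (rho M w)).Finite := ((hG.fin B).insert 0).subset hsub
  exact (Set.infinite_range_of_injective hinj) hfin

/-- Coupling of the two walks: if the `ω`-walk returns to the origin, then at some time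
`m ≥ 1` the `ω⁺`-walk sits at a positive position and every point of `(0, 2 Sp m]`
other than `Sp m` carries no mark. -/
lemma coupling (hG : Good M w) (h0Y : (0:ℝ) ∈ M.Y w)
    (hs1 : M.S 0 1 w = nxt M w 0)
    (hret : ∃ n, 1 ≤ n ∧ M.S 0 n w = 0) :
    ∃ m, 1 ≤ m ∧ 0 < M.Sp m w ∧
      ∀ z, 0 < z → z ≤ 2 * M.Sp m w → z ≠ M.Sp m w → M.marksp m w z = 0 := by
  classical
  have hn0spec := Nat.find_spec hret
  set n₀ := Nat.find hret with hn₀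
  obtain ⟨hn₀1, hn₀0⟩ := hn0spec
  have hx1pos : 0 < nxt M w 0 := (nxt_isLeast hG 0).1.2
  have hs1pos : 0 < M.S 0 1 w := by rw [hs1]; exact hx1pos
  have hn₀2 : 2 ≤ n₀ := by
    rcases Nat.lt_or_ge n₀ 2 with h | h
    · exfalso
      have h1 : n₀ = 1 := by omega
      rw [h1] at hn₀0
      linarith
    · exact h
  have Q : ∀ i, 1 ≤ i → i < n₀ → 0 < M.S 0 i w ∧ M.marks 0 i w 0 = 1 := by
    intro i
    induction i with
    | zero => intro h1 _; omega
    | succ i ih =>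
        intro h1 hlt
        by_cases hi : i = 0
        · subst hi
          refine ⟨hs1pos, ?_⟩
          have hss := mk_succ_self (M := M) (w := w) (n := 0)
          rw [s_zero] at hss
          rw [hss, mk_zero_origin h0Y]
        · have hi1 : 1 ≤ i := by omega
          obtain ⟨hpos, hmk⟩ := ih hi1 (by omega)
          have hmk1 : M.marks 0 (i+1) w 0 = 1 := by
            rw [mk_succ_ne (ne_of_lt hpos), hmk]
          refine ⟨?_, hmk1⟩
          have hne0 : M.S 0 (i+1) w ≠ 0 := by
            intro hc
            exact Nat.find_min hret (show i+1 < n₀ from hlt) ⟨by omega, hc⟩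
          rcases lt_or_gt_of_ne hne0 with hneg | hposs
          · exfalso
            have hnear := (hG.walk i).2.2 0 (ne_of_lt hpos) (Ne.symm hne0) hmk.ge
            have ha : |M.S 0 (i+1) w - M.S 0 i w| = M.S 0 i w - M.S 0 (i+1) w := by
              rw [abs_of_neg (by linarith)]; ring
            have hb : |(0:ℝ) - M.S 0 i w| = M.S 0 i w := by
              rw [zero_sub, abs_neg, abs_of_pos hpos]
            rw [ha, hb] at hnear
            linarith
          · exact hposs
  have Agr : ∀ j, j ≤ n₀ - 1 →
      (M.Sp j w = M.S 0 j w ∧ ∀ z, 0 < z → M.marksp j w z = M.marks 0 j w z) := by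
    intro j
    induction j with
    | zero =>
        intro _
        refine ⟨by rw [sp0, s_zero], ?_⟩
        intro z hz
        rw [M.hmarksp0, M.hmarks0, Set.indicator_of_notMem (by simpa using (ne_of_gt hz)),
          Set.indicator_of_mem (Set.mem_Ioi.2 hz), zero_add]
    | succ j ih =>
        intro hj
        obtain ⟨hsp, hmm⟩ := ih (by omega)
        have hj1 : j + 1 < n₀ := by omega
        have hspos : 0 < M.S 0 (j+1) w := (Q (j+1) (by omega) hj1).1
        have hms : 1 ≤ M.marksp j w (M.S 0 (j+1) w) := by
          rw [hmm _ hspos]; exact (hG.walk j).2.1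
        have hppos : 0 < M.Sp (j+1) w := by
          have hne0 : M.Sp (j+1) w ≠ 0 := by
            cases j with
            | zero =>
                have h := (hG.walkp 0).1
                rw [sp0] at h
                exact h
            | succ j' =>
                intro hc
                have h1 : M.marksp 1 w 0 = 0 := by
                  have hss := mu_succ_self (M := M) (w := w) (n := 0)
                  rw [sp0] at hss
                  rw [hss, mu_zero_origin]
                have h2 := mu_anti (M := M) (w := w) (z := 0)
                  (show 1 ≤ j'+1 by omega)
                simp only at h2
                have h3 := (hG.walkp (j'+1)).2.1
                rw [hc] at h3
                omega
          rcases mu_supp (hG.walkp j).2.1 with h | h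
          · exact absurd h hne0
          · exact h.2
        have hmp : 1 ≤ M.marks 0 j w (M.Sp (j+1) w) := by
          rw [← hmm _ hppos]; exact (hG.walkp j).2.1
        have heq : M.Sp (j+1) w = M.S 0 (j+1) w := by
          by_contra hne
          have h1 := (hG.walk j).2.2 (M.Sp (j+1) w)
            (by rw [← hsp]; exact (hG.walkp j).1) hne hmp
          have h2 := (hG.walkp j).2.2 (M.S 0 (j+1) w)
            (by rw [hsp]; exact (hG.walk j).1) (fun hc => hne hc.symm) hms
          rw [hsp] at h2
          linarith
        refine ⟨heq, ?_⟩
        intro z hz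
        rw [M.hmarksprec, M.hmarksrec, hmm z hz, hsp]
  set m := n₀ - 1 with hm
  have hm1 : 1 ≤ m := by omega
  have hmlt : m < n₀ := by omega
  have hmeq : m + 1 = n₀ := by omega
  obtain ⟨hsp, hmm⟩ := Agr m (le_refl _)
  have hspos : 0 < M.S 0 m w := (Q m hm1 hmlt).1
  refine ⟨m, hm1, by rw [hsp]; exact hspos, ?_⟩
  intro z hz1 hz2 hz3
  rw [hsp] at hz3 hz2
  rw [hmm z hz1]
  by_contra hcon
  have hm1' : 1 ≤ M.marks 0 m w z := by omega
  have hzne : z ≠ M.S 0 (m+1) w := by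
    rw [hmeq, hn₀0]; exact ne_of_gt hz1
  have hnear := (hG.walk m).2.2 z hz3 hzne hm1'
  rw [hmeq, hn₀0] at hnear
  have hb : |(0:ℝ) - M.S 0 m w| = M.S 0 m w := by
    rw [zero_sub, abs_neg, abs_of_pos hspos]
  rw [hb] at hnear
  have habs : |z - M.S 0 m w| ≤ M.S 0 m w := by
    rw [abs_le]
    constructor <;> linarith
  linarith

/-- The deterministic heart of the theorem. -/
theorem main_det (hG : Good M w) (h0Y : (0:ℝ) ∈ M.Y w)
    (hs1 : M.S 0 1 w = nthPoint (M.X w) 1)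
    (hret : ∃ n : ℕ, 1 ≤ n ∧ M.S 0 n w = 0) :
    ∃ k : ℕ, posSeq M w (k+1) < LSeq M w (k+1) := by
  classical
  by_contra hcon
  push_neg at hcon
  have H : ∀ k, LSeq M w (k+1) ≤ posSeq M w (k+1) := hcon
  have hs1' : M.S 0 1 w = nxt M w 0 := by
    rw [hs1]
    show nthPoint (M.X w) 1 = nxt M w 0
    simp [nthPoint, nxt]
  obtain ⟨m, hm1, hmpos, hmzero⟩ := coupling hG h0Y hs1' hret
  have hsX : M.Sp m w ∈ M.X w := by
    rcases sp_mem hG m with h | h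
    · exfalso; rw [h] at hmpos; exact lt_irrefl 0 hmpos
    · exact h.1
  have hKex : ∃ K, M.Sp m w < rho M w K := rho_unbounded hG H (M.Sp m w)
  have hKspec := Nat.find_spec hKex
  set K := Nat.find hKex with hK
  have hrho1 : rho M w 1 ≤ M.Sp m w := by
    have h0 := rinv hG H 0
    have h1 : rho M w 1 = nxt M w (Mx M w (tk M w 0)) := rho_succ_nxt hG h0
    have hex0 : ∃ n, M.marksp (n+1) w (rho M w 0) = 0 := h0.hex
    have htk0 : tk M w 0 = 0 := by
      rw [tk, TR_toNat hex0, Nat.find_eq_zero]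
      have hss := mu_succ_self (M := M) (w := w) (n := 0)
      rw [sp0] at hss
      rw [rho_zero, hss, mu_zero_origin]
    rw [h1, htk0, Mx_zero]
    exact (nxt_isLeast hG 0).2 ⟨hsX, hmpos⟩
  have hK2 : 2 ≤ K := by
    have h0 : ¬ (M.Sp m w < rho M w 0) := by rw [rho_zero]; linarith
    have h1 : ¬ (M.Sp m w < rho M w 1) := not_lt.2 hrho1
    rcases Nat.lt_or_ge K 2 with h | h
    · interval_cases K
      · exact absurd hKspec h0
      · exact absurd hKspec h1
    · exact h
  set k := K - 1 with hk
  have hkk : k + 1 = K := by omega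
  have hk1 : 1 ≤ k := by omega
  have hkle : rho M w k ≤ M.Sp m w := not_lt.1 (Nat.find_min hKex (show k < K by omega))
  have hklt : M.Sp m w < rho M w (k+1) := by rw [hkk]; exact hKspec
  have hratio : rho M w (k+1) ≤ 2 * rho M w k := rho_ratio hG H k hk1
  have hr'z : M.marksp m w (rho M w (k+1)) = 0 :=
    hmzero _ (lt_trans hmpos hklt) (by linarith) (Ne.symm (ne_of_lt hklt))
  have hinv1 := rinv hG H (k+1)
  have htk : tk M w (k+1) ≤ m - 1 := by
    rw [tk, TR_toNat hinv1.hex]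
    refine Nat.find_min' hinv1.hex ?_
    rw [show m - 1 + 1 = m by omega]
    exact hr'z
  have hmark : 1 ≤ M.marksp (m-1) w (M.Sp m w) := by
    have h := (hG.walkp (m-1)).2.1
    rw [show m - 1 + 1 = m by omega] at h
    exact h
  have hmark2 : 1 ≤ M.marksp (tk M w (k+1)) w (M.Sp m w) := by
    have h := mu_anti (M := M) (w := w) (z := M.Sp m w) htk
    simp only at h
    omega
  have hclear := hinv1.clear (M.Sp m w) hklt
  omega

open MeasureTheory in
lemma poisson_unbounded {Ω : Type} [MeasurableSpace Ω] {P : MeasureTheory.Measure Ω}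
    {N : Ω → Set ℝ} {c : ℝ} (hpp : IsPoissonPP P N c) (hc : 0 < c) :
    ∀ᵐ ωs ∂P, ∀ t : ℝ, (N ωs ∩ Set.Ioi t).Nonempty := by
  have key : ∀ q : ℚ,
      P (⋂ n : ℕ, {ωs | ptCount (N ωs) (Set.Ioc (q:ℝ) (q + n)) = 0}) = 0 := by
    intro q
    have hle : ∀ n : ℕ, P (⋂ n : ℕ, {ωs | ptCount (N ωs) (Set.Ioc (q:ℝ) (q + n)) = 0})
        ≤ ENNReal.ofReal (Real.exp (-(c * n))) := by
      intro n
      have hA : MeasurableSet (Set.Ioc (q:ℝ) (q+n)) := measurableSet_Ioc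
      have hvol : MeasureTheory.volume (Set.Ioc (q:ℝ) (q+n)) = ENNReal.ofReal n := by
        rw [Real.volume_Ioc]; congr 1; ring
      have hvne : MeasureTheory.volume (Set.Ioc (q:ℝ) (q+n)) ≠ ⊤ := by
        rw [hvol]; exact ENNReal.ofReal_ne_top
      have hdist := hpp.2.2.1 _ hA hvne 0
      have htoReal : (MeasureTheory.volume (Set.Ioc (q:ℝ) (q+n))).toReal = n := by
        rw [hvol, ENNReal.toReal_ofReal (Nat.cast_nonneg n)]
      rw [htoReal] at hdist
      simp only [pow_zero, Nat.factorial_zero, Nat.cast_one, mul_one, div_one] at hdist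
      calc P (⋂ n : ℕ, {ωs | ptCount (N ωs) (Set.Ioc (q:ℝ) (q + n)) = 0})
          ≤ P {ωs | ptCount (N ωs) (Set.Ioc (q:ℝ) (q + n)) = 0} :=
            measure_mono (Set.iInter_subset _ n)
        _ = _ := hdist
    refine le_antisymm ?_ zero_le
    have hmul : Filter.Tendsto (fun n : ℕ => c * (n:ℝ)) Filter.atTop Filter.atTop :=
      Filter.Tendsto.const_mul_atTop hc tendsto_natCast_atTop_atTop
    have hneg : Filter.Tendsto (fun n : ℕ => -(c * (n:ℝ))) Filter.atTop Filter.atBot :=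
      Filter.tendsto_neg_atTop_atBot.comp hmul
    have hexp : Filter.Tendsto (fun n : ℕ => Real.exp (-(c * (n:ℝ)))) Filter.atTop
        (nhds 0) := Real.tendsto_exp_atBot.comp hneg
    have hof : Filter.Tendsto (fun n : ℕ => ENNReal.ofReal (Real.exp (-(c * (n:ℝ)))))
        Filter.atTop (nhds 0) := by
      have := ENNReal.tendsto_ofReal hexp
      simpa using this
    exact ge_of_tendsto' hof hle
  have hae : ∀ᵐ ωs ∂P, ∀ q : ℚ, ∃ n : ℕ, ptCount (N ωs) (Set.Ioc (q:ℝ) (q + n)) ≠ 0 := by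
    rw [MeasureTheory.ae_all_iff]
    intro q
    have hcompl := MeasureTheory.compl_mem_ae_iff.2 (key q)
    refine Filter.mem_of_superset hcompl ?_
    intro ωs hωs
    simp only [Set.mem_compl_iff, Set.mem_iInter, Set.mem_setOf_eq, not_forall] at hωs
    exact hωs
  filter_upwards [hae] with ωs hωs
  intro t
  obtain ⟨q, hq⟩ := exists_rat_gt t
  obtain ⟨n, hn⟩ := hωs q
  have hne : (N ωs ∩ Set.Ioc (q:ℝ) (q+n)).Nonempty := by
    by_contra hcon
    rw [Set.not_nonempty_iff_eq_empty] at hcon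
    exact hn (by rw [ptCount, hcon, Set.ncard_empty])
  obtain ⟨x, hxN, hx1, hx2⟩ := hne
  exact ⟨x, hxN, lt_trans hq hx1⟩

/-- Almost surely, the configuration is good. -/
lemma good_ae (M : GreedyModel) : ∀ᵐ w ∂M.P, Good M w := by
  obtain ⟨hYX', hY, hXY, hind⟩ := M.hpoisson
  have h1 := hY.1
  have h2 := hXY.1
  have h3 := poisson_unbounded hXY (by linarith [M.hp1] : (0:ℝ) < 1 - M.p)
  have h4 := M.hwalk
  have h5 := M.hwalkp
  filter_upwards [h1, h2, h3, h4, h5] with w hw1 hw2 hw3 hw4 hw5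
  refine ⟨?_, ?_, hw4 0 (M.h0X w), hw5⟩
  · intro r
    have hsub : M.X w ∩ Set.Icc (-r) r ⊆
        insert (0:ℝ) (((M.Y w \ {0}) ∩ Set.Icc (-r) r) ∪
          (((M.X w \ {0}) \ (M.Y w \ {0})) ∩ Set.Icc (-r) r)) := by
      rintro z ⟨hzX, hzI⟩
      by_cases hz0 : z = 0
      · rw [hz0]; exact Set.mem_insert _ _
      · refine Set.mem_insert_of_mem _ ?_
        by_cases hzY : z ∈ M.Y w
        · exact Or.inl ⟨⟨hzY, hz0⟩, hzI⟩
        · exact Or.inr ⟨⟨⟨hzX, hz0⟩, fun hc => hzY hc.1⟩, hzI⟩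
    exact (((hw1 r).union (hw2 r)).insert 0).subset hsub
  · intro t
    obtain ⟨x, hxN, hxt⟩ := hw3 t
    exact ⟨x, hxN.1.1, hxt⟩

end GWAux

/-- `ℙ¹`-almost surely, on the event `[ω(0) = 2 and S₁ = X₁]`, if the greedy walk on the
full configuration `ω` returns to the origin then `L_{k+1} > L₀ + L₁ + ⋯ + L_k` for
some `k ≥ 0`. -/
theorem return_to_origin_implies_exceptional_renewal (M : GreedyModel) :
    ∀ᵐ ωs ∂M.P, (0 : ℝ) ∈ M.Y ωs → M.S 0 1 ωs = nthPoint (M.X ωs) 1 →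
      (∃ n : ℕ, 1 ≤ n ∧ M.S 0 n ωs = 0) →
      ∃ k : ℕ, posSeq M ωs (k + 1) < LSeq M ωs (k + 1) := by
  filter_upwards [GWAux.good_ae M] with ωs hG
  intro h0Y hs1 hret
  exact GWAux.main_det hG h0Y hs1 hret

end
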